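/- Let T be a closed M-tableau for a set of M-clauses C, and let T' be obtained from T by a single application of the Separation rule to a node n of T with child μ labelled l = (L, t, S), producing the new child labelled (L, t, S2). Then at most one branch of T' is not closed, and any non-closed branch of T' necessarily contains the node labelled (L, t, S2). In particular, if S2 is empty then T' is closed. -/

import Mathlib

namespace MTab

/-- Variables: ordinary variables and abstraction variables. -/
inductive Var : Type
  | ord : ℕ → Var
  | abs : ℕ → Var
  deriving DecidableEq

def Var.isAbs : Var → Prop
  | .abs _ => True
  | .ord _ => False

/-- First-order terms over function symbols `F`. -/
inductive Term (F : Type) : Type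
  | var : Var → Term F
  | fn : F → List (Term F) → Term F

/-- Substitutions. -/
abbrev Subst (F : Type) := Var → Term F

def Term.subst {F : Type} (σ : Subst F) : Term F → Term F
  | .var v => σ v
  | .fn f ts => .fn f (ts.attach.map (fun x => Term.subst σ x.1))
  decreasing_by have := List.sizeOf_lt_of_mem x.2; simp only [Term.fn.sizeOf_spec]; omega

def Term.varList {F : Type} : Term F → List Var
  | .var v => [v]
  | .fn _ ts => (ts.attach.map (fun x => Term.varList x.1)).flatten
  decreasing_by have := List.sizeOf_lt_of_mem x.2; simp only [Term.fn.sizeOf_spec]; omega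

def Term.vars {F : Type} (t : Term F) : Set Var := {v | v ∈ t.varList}

def Subst.idS {F : Type} : Subst F := fun v => Term.var v

def Subst.dom {F : Type} (σ : Subst F) : Set Var := {v | σ v ≠ Term.var v}

def Subst.vars {F : Type} (σ : Subst F) : Set Var :=
  σ.dom ∪ {v | ∃ w ∈ σ.dom, v ∈ Term.vars (σ w)}

/-- Full composition: apply `σ` first, then `τ`. -/
def Subst.comp {F : Type} (σ τ : Subst F) : Subst F := fun v => Term.subst τ (σ v)

open Classical in
/-- Composition of `σ` with `τ`, restricted to the domain of `σ`. -/
noncomputable def Subst.compOn {F : Type} (σ τ : Subst F) : Subst F :=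
  fun v => if v ∈ σ.dom then Term.subst τ (σ v) else Term.var v

def argsVars {F : Type} (args : List (Term F)) : Set Var := {v | ∃ t ∈ args, v ∈ Term.vars t}

/-- Ordinary first-order literals over predicate symbols `P`
(`pol = true` for positive literals). -/
structure Lit (F P : Type) where
  pol : Bool
  pred : P
  args : List (Term F)

def Lit.subst {F P : Type} (σ : Subst F) (l : Lit F P) : Lit F P :=
  ⟨l.pol, l.pred, l.args.map (Term.subst σ)⟩

/-- M-literals: `⊤` or a triple `(L, t, S)`. -/
inductive MLit (F P : Type)
  | top : MLit F P
  | lit (pol : Bool) (pred : P) (args : List (Term F)) (S : Set (Subst F)) : MLit F P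

/-- The (common) domain of the substitution set of an M-literal. -/
def MLit.domS {F P : Type} : MLit F P → Set Var
  | .top => ∅
  | .lit _ _ _ S => {v | ∃ σ ∈ S, v ∈ Subst.dom σ}

/-- Side conditions in the definition of M-literals: all substitutions of `S` share a
common domain `D` consisting of abstraction variables of the argument tuple, and
`Vars(t σ) ∩ D = ∅` for all `σ ∈ S`. -/
def MLit.WF {F P : Type} : MLit F P → Prop
  | .top => True
  | .lit _ _ args S =>
      (∀ σ ∈ S, ∀ τ ∈ S, Subst.dom σ = Subst.dom τ) ∧
      (∀ σ ∈ S, ∀ v ∈ Subst.dom σ, Var.isAbs v ∧ v ∈ argsVars args) ∧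
      (∀ σ ∈ S, ∀ v ∈ Subst.dom σ, v ∉ argsVars (args.map (Term.subst σ)))

def MLit.finiteS {F P : Type} : MLit F P → Prop
  | .top => True
  | .lit _ _ _ S => S.Finite

/-- All variables occurring in an M-literal. -/
def MLit.varsIn {F P : Type} : MLit F P → Set Var
  | .top => ∅
  | .lit _ _ args S => argsVars args ∪ {v | ∃ σ ∈ S, v ∈ Subst.vars σ}

/-- Semantics: `⊤` or a clause, a clause being identified with the set of its
literals (which accounts for associativity, commutativity and idempotence of `∨`). -/
inductive NF (F P : Type)
  | tru : NF F P
  | clause : Set (Lit F P) → NF F P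

def MLit.semSet {F P : Type} : MLit F P → Set (Lit F P)
  | .top => ∅
  | .lit b p args S => {l | ∃ σ ∈ S, l = ⟨b, p, args.map (Term.subst σ)⟩}

def MLit.sem {F P : Type} : MLit F P → NF F P
  | .top => .tru
  | .lit b p args S => .clause (MLit.semSet (.lit b p args S))

/-- M-clauses: sets of M-literals. -/
abbrev MClause (F P : Type) := Set (MLit F P)

open Classical in
noncomputable def MClause.sem {F P : Type} (C : MClause F P) : NF F P :=
  if MLit.top ∈ C then .tru else .clause {l | ∃ m ∈ C, l ∈ MLit.semSet m}

/-- Well-formed M-clauses: distinct M-literals have substitution sets with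
disjoint domains. -/
def MClause.WellFormed {F P : Type} (C : MClause F P) : Prop :=
  ∀ l ∈ C, ∀ m ∈ C, l ≠ m → MLit.domS l ∩ MLit.domS m = ∅

def GoodClauseSet {F P : Type} (𝒞 : Set (MClause F P)) : Prop :=
  ∀ C ∈ 𝒞, MClause.WellFormed C ∧ ∀ l ∈ C, MLit.WF l

def FiniteClauseSet {F P : Type} (𝒞 : Set (MClause F P)) : Prop :=
  ∀ C ∈ 𝒞, C.Finite ∧ ∀ l ∈ C, MLit.finiteS l

open Classical in
/-- Application of a substitution to an M-literal: the arguments are instantiated by the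
restriction of `σ` to the variables not in `dom S`, and the substitutions of `S` are
composed with `σ`. -/
noncomputable def MLit.subst {F P : Type} (σ : Subst F) : MLit F P → MLit F P
  | .top => .top
  | .lit b p args S =>
      .lit b p
        (args.map (Term.subst (fun v => if ∃ θ ∈ S, v ∈ Subst.dom θ then Term.var v else σ v)))
        ((fun θ => Subst.compOn θ σ) '' S)

/-- Renamings: injective, mapping ordinary variables to ordinary variables and
abstraction variables to abstraction variables. -/
def VarRenaming (ρ : Var → Var) : Prop :=
  Function.Injective ρ ∧ (∀ n, ∃ m, ρ (Var.ord n) = Var.ord m) ∧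
    (∀ n, ∃ m, ρ (Var.abs n) = Var.abs m)

def renSubst {F : Type} (ρ : Var → Var) : Subst F := fun v => Term.var (ρ v)

open Classical in
/-- Transport of a substitution along a renaming `ρ`. -/
noncomputable def Subst.renameBy {F : Type} (ρ : Var → Var) (σ : Subst F) : Subst F :=
  fun v => if h : ∃ w, ρ w = v then Term.subst (renSubst ρ) (σ h.choose) else Term.var v

/-- Renaming of an M-literal (all variables, including those of `dom S`, are renamed). -/
noncomputable def MLit.rename {F P : Type} (ρ : Var → Var) : MLit F P → MLit F P
  | .top => .top
  | .lit b p args S => .lit b p (args.map (Term.subst (renSubst ρ))) (Subst.renameBy ρ '' S)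

noncomputable def MClause.rename {F P : Type} (ρ : Var → Var) (C : MClause F P) : MClause F P :=
  MLit.rename ρ '' C

def MLit.head {F P : Type} : MLit F P → Option (Bool × P)
  | .top => none
  | .lit b p _ _ => some (b, p)

/-- Bundled normal form. -/
def MClause.BNF {F P : Type} (C : MClause F P) : Prop :=
  (∀ b p args S, MLit.lit b p args S ∈ C → S ≠ ∅) ∧
  (MLit.top ∈ C → C = {MLit.top}) ∧
  (∀ l ∈ C, ∀ m ∈ C, l ≠ m → MLit.head l ≠ MLit.head m)

end MTab
namespace MTab

/-- Pre-tableaux: trees labelled by M-literals. -/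
inductive Tree (F P : Type)
  | node : MLit F P → List (Tree F P) → Tree F P

def Tree.label {F P : Type} : Tree F P → MLit F P
  | .node l _ => l

def Tree.children {F P : Type} : Tree F P → List (Tree F P)
  | .node _ c => c

/-- The subtree of `t` at position `p` (a position is a list of child indices). -/
def Tree.subtreeAt {F P : Type} : List ℕ → Tree F P → Option (Tree F P)
  | [], t => some t
  | i :: p, .node _ cs => (cs[i]?).bind (Tree.subtreeAt p)

def Tree.labelAt {F P : Type} (p : List ℕ) (t : Tree F P) : Option (MLit F P) :=
  (Tree.subtreeAt p t).map Tree.label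

def Tree.IsPos {F P : Type} (t : Tree F P) (p : List ℕ) : Prop :=
  (Tree.subtreeAt p t).isSome

def Tree.IsLeafPos {F P : Type} (t : Tree F P) (p : List ℕ) : Prop :=
  ∃ l, Tree.subtreeAt p t = some (Tree.node l [])

/-- All variables occurring in the labels of a tree. -/
def Tree.varsIn {F P : Type} (t : Tree F P) : Set Var :=
  {v | ∃ p l, Tree.labelAt p t = some l ∧ v ∈ MLit.varsIn l}

noncomputable def Tree.substT {F P : Type} (σ : Subst F) : Tree F P → Tree F P
  | .node l c => .node (MLit.subst σ l) (c.attach.map (fun x => Tree.substT σ x.1))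
  decreasing_by have := List.sizeOf_lt_of_mem x.2; simp only [Tree.node.sizeOf_spec]; omega

/-- Replace the subtree at position `p` by `u`. -/
def Tree.replaceAt {F P : Type} : List ℕ → Tree F P → Tree F P → Tree F P
  | [], u, _ => u
  | i :: p, u, .node l cs =>
      .node l (match cs[i]? with
        | some tj => cs.set i (Tree.replaceAt p u tj)
        | none => cs)

/-- Change the label of the node at position `p` to `m`. -/
def Tree.relabelAt {F P : Type} : List ℕ → MLit F P → Tree F P → Tree F P
  | [], m, .node _ c => .node m c
  | i :: p, m, .node l cs =>
      .node l (match cs[i]? with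
        | some tj => cs.set i (Tree.relabelAt p m tj)
        | none => cs)

/-- Add a new (last) child `u` to the node at position `p`. -/
def Tree.appendChildAt {F P : Type} : List ℕ → Tree F P → Tree F P → Tree F P
  | [], u, .node l c => .node l (c ++ [u])
  | i :: p, u, .node l cs =>
      .node l (match cs[i]? with
        | some tj => cs.set i (Tree.appendChildAt p u tj)
        | none => cs)

/-- Number of nodes of a tree. -/
def Tree.size {F P : Type} : Tree F P → ℕ
  | .node _ c => 1 + ((c.attach.map (fun x => Tree.size x.1)).sum)
  decreasing_by have := List.sizeOf_lt_of_mem x.2; simp only [Tree.node.sizeOf_spec]; omega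

/-- Number of leaves (branches) of a tree. -/
def Tree.leafCount {F P : Type} : Tree F P → ℕ
  | .node _ [] => 1
  | .node _ (t :: ts) => (((t :: ts).attach.map (fun x => Tree.leafCount x.1)).sum)
  decreasing_by have := List.sizeOf_lt_of_mem x.2; simp only [Tree.node.sizeOf_spec]; omega

/-- Height of a tree (number of nodes on a longest branch). -/
def Tree.height {F P : Type} : Tree F P → ℕ
  | .node _ c => 1 + ((c.attach.map (fun x => Tree.height x.1)).foldr max 0)
  decreasing_by have := List.sizeOf_lt_of_mem x.2; simp only [Tree.node.sizeOf_spec]; omega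

/-- `p` is a proper prefix of `q` (i.e. the node at `q` is a proper descendant
of the node at `p`). -/
def ProperPrefix (p q : List ℕ) : Prop := p <+: q ∧ p ≠ q

def singleSubst {F : Type} (x : Var) (s : Term F) : Subst F :=
  fun v => if v = x then s else Term.var v

/-- The Expansion rule. -/
def ExpandStep {F P : Type} (𝒞 : Set (MClause F P)) (T T' : Tree F P) : Prop :=
  ∃ (p : List ℕ) (l : MLit F P) (C : MClause F P) (ρ : Var → Var) (ls : List (MLit F P)),
    Tree.subtreeAt p T = some (Tree.node l []) ∧
    C ∈ 𝒞 ∧ MLit.top ∉ C ∧ VarRenaming ρ ∧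
    ls.Nodup ∧ {m | m ∈ ls} = MClause.rename ρ C ∧
    (∀ m ∈ ls, MLit.varsIn m ∩ Tree.varsIn T = ∅) ∧
    T' = Tree.replaceAt p (Tree.node l (ls.map (fun m => Tree.node m []))) T

/-- The Instantiation rule: an ordinary variable `x` is instantiated by a term `s`,
provided every node whose label contains `x` is a proper descendant of every node
introducing an abstraction variable of `s`. -/
def InstStep {F P : Type} (T T' : Tree F P) : Prop :=
  ∃ (x : ℕ) (s : Term F),
    (∀ (p p' : List ℕ) (l l' : MLit F P),
        Tree.labelAt p T = some l → Tree.labelAt p' T = some l' →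
        Var.ord x ∈ MLit.varsIn l →
        (∃ α, α ∈ MLit.domS l' ∧ α ∈ Term.vars s ∧ Var.isAbs α) →
        ProperPrefix p' p) ∧
    T' = Tree.substT (singleSubst (Var.ord x) s) T

/-- The Separation rule, applied below the node at position `q`, on its `i`-th child `μ`
labelled `(L, t, S)`, with instantiation `θ` (so that `r = t θ`), splitting `S` into
`S1` (witnessed by the choice function `f` assigning to each `σ ∈ S1` the
corresponding `σ'`) and `S2 = S \ S1`. -/
def SepStep {F P : Type} (T : Tree F P) (q : List ℕ) (i : ℕ)
    (b : Bool) (pr : P) (args : List (Term F)) (S : Set (Subst F))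
    (θ : Subst F) (f : Subst F → Subst F) (S1 S2 : Set (Subst F)) (T' : Tree F P) : Prop :=
  ∃ (n μ : Tree F P),
    Tree.subtreeAt q T = some n ∧ n.children ≠ [] ∧
    (n.children)[i]? = some μ ∧ μ.label = MLit.lit b pr args S ∧
    Subst.dom θ = MLit.domS (MLit.lit b pr args S) ∧
    (∀ α, Var.isAbs α → α ∈ argsVars (args.map (Term.subst θ)) →
      α ∉ MLit.domS (MLit.lit b pr args S)) ∧
    S1 = {σ | σ ∈ S ∧ ∃ σ' : Subst F,
            args.map (Term.subst σ) = (args.map (Term.subst θ)).map (Term.subst σ') ∧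
            ∀ v ∈ Subst.dom σ', Var.isAbs v ∧ v ∉ Tree.varsIn T} ∧
    (∀ σ ∈ S1,
        args.map (Term.subst σ) = (args.map (Term.subst θ)).map (Term.subst (f σ)) ∧
        ∀ v ∈ Subst.dom (f σ), Var.isAbs v ∧ v ∉ Tree.varsIn T) ∧
    S1 ≠ ∅ ∧ S2 = S \ S1 ∧
    T' = Tree.appendChildAt q (Tree.node (MLit.lit b pr args S2) [])
          (Tree.relabelAt (q ++ [i]) (MLit.lit b pr (args.map (Term.subst θ)) (f '' S1))
            (Tree.substT θ T))

/-- M-tableaux for a set of M-clauses. -/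
inductive MTableau {F P : Type} (𝒞 : Set (MClause F P)) : Tree F P → Prop
  | init : MTableau 𝒞 (Tree.node MLit.top [])
  | expand {T T' : Tree F P} : MTableau 𝒞 T → ExpandStep 𝒞 T T' → MTableau 𝒞 T'
  | inst {T T' : Tree F P} : MTableau 𝒞 T → InstStep T T' → MTableau 𝒞 T'
  | sep {T T' : Tree F P} : MTableau 𝒞 T →
      (∃ q i b pr args S θ f S1 S2, SepStep T q i b pr args S θ f S1 S2 T') →
      MTableau 𝒞 T'

/-- `false` literals: M-literals with an empty substitution set. -/
def MLit.isFalse {F P : Type} : MLit F P → Prop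
  | .top => False
  | .lit _ _ _ S => S = ∅

/-- Closedness of the branch ending at leaf position `lp`. -/
def ClosedBranch {F P : Type} (T : Tree F P) (lp : List ℕ) : Prop :=
  (∃ q l, q <+: lp ∧ Tree.labelAt q T = some l ∧ MLit.isFalse l) ∨
  (∃ q1 q2 pr args S1 S2, q1 <+: lp ∧ q2 <+: lp ∧
    Tree.labelAt q1 T = some (MLit.lit true pr args S1) ∧
    Tree.labelAt q2 T = some (MLit.lit false pr args S2))

def ClosedTree {F P : Type} (T : Tree F P) : Prop :=
  ∀ p, Tree.IsLeafPos T p → ClosedBranch T p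

/-- First-order interpretations. -/
structure Interp (F P : Type) where
  carrier : Type
  nonempty : Nonempty carrier
  fI : F → List carrier → carrier
  pI : P → List carrier → Prop

def Term.eval {F P : Type} (I : Interp F P) (ν : Var → I.carrier) : Term F → I.carrier
  | .var v => ν v
  | .fn f ts => I.fI f (ts.attach.map (fun x => Term.eval I ν x.1))
  decreasing_by have := List.sizeOf_lt_of_mem x.2; simp only [Term.fn.sizeOf_spec]; omega

def Lit.holds {F P : Type} (I : Interp F P) (ν : Var → I.carrier) (l : Lit F P) : Prop :=
  if l.pol then I.pI l.pred (l.args.map (Term.eval I ν))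
  else ¬ I.pI l.pred (l.args.map (Term.eval I ν))

/-- Satisfaction of a (universally closed) clause, or of `true`. -/
def Interp.satNF {F P : Type} (I : Interp F P) : NF F P → Prop
  | .tru => True
  | .clause c => ∀ ν : Var → I.carrier, ∃ l ∈ c, Lit.holds I ν l

/-- `⟦𝒞⟧` is unsatisfiable. -/
def Unsat {F P : Type} (𝒞 : Set (MClause F P)) : Prop :=
  ¬ ∃ I : Interp F P, ∀ C ∈ 𝒞, I.satNF (MClause.sem C)

/-- Disjunction of `NF` formulas. -/
def NF.or {F P : Type} : NF F P → NF F P → NF F P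
  | .tru, _ => .tru
  | .clause _, .tru => .tru
  | .clause s, .clause s' => .clause (s ∪ s')

def NF.disj {F P : Type} (l : List (NF F P)) : NF F P := l.foldr NF.or (NF.clause ∅)

/-- Applying a substitution to an `NF` formula (instances of a formula). -/
def NF.substApp {F P : Type} (σ : Subst F) : NF F P → NF F P
  | .tru => .tru
  | .clause s => .clause (Lit.subst σ '' s)

end MTab
namespace MTab

section AuxLemmas

variable {F P : Type}

theorem Tree.substT_node (σ : Subst F) (l : MLit F P) (c : List (Tree F P)) :
    Tree.substT σ (Tree.node l c) = Tree.node (MLit.subst σ l) (c.map (Tree.substT σ)) := by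
  rw [Tree.substT]
  simp [List.attach_map_val]

theorem Tree.subtreeAt_append (p r : List ℕ) (T : Tree F P) :
    Tree.subtreeAt (p ++ r) T = (Tree.subtreeAt p T).bind (Tree.subtreeAt r) := by
  induction p generalizing T with
  | nil => simp [Tree.subtreeAt]
  | cons i p ih =>
    cases T with
    | node l cs =>
      simp only [List.cons_append, Tree.subtreeAt]
      cases cs[i]? with
      | none => simp
      | some t => simp [ih]

theorem Tree.subtreeAt_substT (σ : Subst F) (p : List ℕ) (T : Tree F P) :
    Tree.subtreeAt p (Tree.substT σ T) = (Tree.subtreeAt p T).map (Tree.substT σ) := by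
  induction p generalizing T with
  | nil => simp [Tree.subtreeAt]
  | cons i p ih =>
    cases T with
    | node l cs =>
      rw [Tree.substT_node]
      simp only [Tree.subtreeAt, List.getElem?_map]
      cases cs[i]? with
      | none => simp
      | some t => simp [ih]


variable {F P : Type}

theorem Tree.substT_node' (σ : Subst F) (l : MLit F P) (c : List (Tree F P)) :
    Tree.substT σ (Tree.node l c) = Tree.node (MLit.subst σ l) (c.map (Tree.substT σ)) := by
  rw [Tree.substT]; simp [List.attach_map_val]

theorem labelAt_relabelAt_ne (p r : List ℕ) (m : MLit F P) (T : Tree F P) (h : r ≠ p) :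
    Tree.labelAt r (Tree.relabelAt p m T) = Tree.labelAt r T := by
  induction p generalizing T r with
  | nil =>
    cases T with
    | node l c =>
      cases r with
      | nil => exact absurd rfl h
      | cons j r => simp [Tree.relabelAt, Tree.labelAt, Tree.subtreeAt]
  | cons i p ih =>
    cases T with
    | node l cs =>
      cases r with
      | nil => simp [Tree.relabelAt, Tree.labelAt, Tree.subtreeAt, Tree.label]
      | cons j r =>
        simp only [Tree.relabelAt]
        cases hcs : cs[i]? with
        | none => rfl
        | some tj =>
          by_cases hji : j = i
          · have hil : i < cs.length := by
              by_contra hh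
              simp [List.getElem?_eq_none (Nat.le_of_not_lt hh)] at hcs
            subst hji
            simp only [Tree.labelAt, Tree.subtreeAt, List.getElem?_set_self hil, hcs,
              Option.bind_some, Option.bind_some]
            have : r ≠ p := fun hh => h (by rw [hh])
            exact ih r tj this
          · simp only [Tree.labelAt, Tree.subtreeAt,
              List.getElem?_set_ne (fun hh => hji hh.symm)]

variable {F P : Type}

/-- children-count at a position: determines the tree "shape". -/
def Tree.shape (r : List ℕ) (T : Tree F P) : Option ℕ :=
  (Tree.subtreeAt r T).map (fun s => s.children.length)

theorem labelAt_relabelAt_eq (p : List ℕ) (m : MLit F P) (T : Tree F P)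
    (h : (Tree.subtreeAt p T).isSome) :
    Tree.labelAt p (Tree.relabelAt p m T) = some m := by
  induction p generalizing T with
  | nil =>
    cases T with
    | node l c => simp [Tree.relabelAt, Tree.labelAt, Tree.subtreeAt, Tree.label]
  | cons i p ih =>
    cases T with
    | node l cs =>
      simp only [Tree.subtreeAt] at h
      cases hcs : cs[i]? with
      | none => rw [hcs] at h; simp at h
      | some tj =>
        rw [hcs] at h
        have hil : i < cs.length := by
          by_contra hh
          simp [List.getElem?_eq_none (Nat.le_of_not_lt hh)] at hcs
        simp only [Tree.relabelAt, hcs, Tree.labelAt, Tree.subtreeAt,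
          List.getElem?_set_self hil, Option.bind_some]
        exact ih tj h

theorem shape_relabelAt (p r : List ℕ) (m : MLit F P) (T : Tree F P) :
    Tree.shape r (Tree.relabelAt p m T) = Tree.shape r T := by
  induction p generalizing T r with
  | nil =>
    cases T with
    | node l c =>
      cases r with
      | nil => simp [Tree.relabelAt, Tree.shape, Tree.subtreeAt, Tree.children]
      | cons j r => simp [Tree.relabelAt, Tree.shape, Tree.subtreeAt]
  | cons i p ih =>
    cases T with
    | node l cs =>
      cases r with
      | nil =>
        simp only [Tree.relabelAt]
        cases cs[i]? <;> simp [Tree.shape, Tree.subtreeAt, Tree.children]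
      | cons j r =>
        simp only [Tree.relabelAt]
        cases hcs : cs[i]? with
        | none => rfl
        | some tj =>
          by_cases hji : j = i
          · have hil : i < cs.length := by
              by_contra hh
              simp [List.getElem?_eq_none (Nat.le_of_not_lt hh)] at hcs
            subst hji
            simp only [Tree.shape, Tree.subtreeAt, List.getElem?_set_self hil, hcs,
              Option.bind_some]
            exact ih r tj
          · simp only [Tree.shape, Tree.subtreeAt,
              List.getElem?_set_ne (fun hh => hji hh.symm)]

variable {F P : Type}


theorem labelAt_appendChildAt (q : List ℕ) (u T : Tree F P) (n : Tree F P)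
    (h : Tree.subtreeAt q T = some n) (r : List ℕ) :
    Tree.labelAt r (Tree.appendChildAt q u T) =
      if (q ++ [n.children.length]) <+: r then Tree.labelAt (r.drop (q.length + 1)) u
      else Tree.labelAt r T := by
  induction q generalizing T r with
  | nil =>
    cases T with
    | node l c =>
      simp only [Tree.subtreeAt] at h
      cases h
      cases r with
      | nil =>
        simp [Tree.appendChildAt, Tree.labelAt, Tree.subtreeAt, Tree.label, Tree.children]
      | cons j r =>
        simp only [Tree.appendChildAt, Tree.labelAt, Tree.subtreeAt, List.nil_append,
          List.cons_prefix_cons, List.nil_prefix, and_true, Tree.children, List.length_nil,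
          List.drop_succ_cons, List.drop_zero]
        by_cases hj : c.length = j
        · subst hj
          simp [List.getElem?_append_right, List.getElem?_eq_none (Nat.le_refl _)]
        · rw [if_neg hj]
          rcases Nat.lt_or_ge j c.length with hlt | hge
          · rw [List.getElem?_append_left hlt]
          · have hgt : c.length < j := Nat.lt_of_le_of_ne hge (fun hh => hj hh)
            rw [List.getElem?_eq_none (Nat.le_of_lt hgt), List.getElem?_eq_none]
            simp [Nat.succ_le_of_lt hgt]
  | cons i q ih =>
    cases T with
    | node l cs =>
      simp only [Tree.subtreeAt] at h
      cases hcs : cs[i]? with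
      | none => rw [hcs] at h; simp at h
      | some tj =>
        rw [hcs] at h
        simp only [Option.bind_some] at h
        have hil : i < cs.length := by
          by_contra hh
          simp [List.getElem?_eq_none (Nat.le_of_not_lt hh)] at hcs
        cases r with
        | nil =>
          simp [Tree.appendChildAt, hcs, Tree.labelAt, Tree.subtreeAt, Tree.label]
        | cons j r =>
          simp only [Tree.appendChildAt, hcs, Tree.labelAt, Tree.subtreeAt,
            List.cons_append, List.cons_prefix_cons, List.length_cons,
            List.drop_succ_cons]
          by_cases hji : j = i
          · subst hji
            simp only [List.getElem?_set_self hil, Option.bind_some, hcs,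
              if_pos rfl, true_and]
            have := ih tj h r
            simp only [Tree.labelAt] at this
            rw [this]
          · rw [List.getElem?_set_ne (fun hh => hji hh.symm), if_neg (fun hh => hji hh.1.symm)]

variable {F P : Type}


theorem shape_appendChildAt (q : List ℕ) (u T : Tree F P) (n : Tree F P)
    (h : Tree.subtreeAt q T = some n) (r : List ℕ) :
    Tree.shape r (Tree.appendChildAt q u T) =
      if (q ++ [n.children.length]) <+: r then Tree.shape (r.drop (q.length + 1)) u
      else if r = q then some (n.children.length + 1)
      else Tree.shape r T := by
  induction q generalizing T r with
  | nil =>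
    cases T with
    | node l c =>
      simp only [Tree.subtreeAt] at h
      cases h
      cases r with
      | nil =>
        simp [Tree.appendChildAt, Tree.shape, Tree.subtreeAt, Tree.children]
      | cons j r =>
        simp only [Tree.appendChildAt, Tree.shape, Tree.subtreeAt, List.nil_append,
          List.cons_prefix_cons, List.nil_prefix, and_true, Tree.children, List.length_nil,
          List.drop_succ_cons, List.drop_zero, reduceCtorEq, if_false]
        by_cases hj : c.length = j
        · subst hj
          simp [List.getElem?_append_right, List.getElem?_eq_none (Nat.le_refl _)]
        · rw [if_neg hj]
          rcases Nat.lt_or_ge j c.length with hlt | hge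
          · rw [List.getElem?_append_left hlt]
          · have hgt : c.length < j := Nat.lt_of_le_of_ne hge (fun hh => hj hh)
            rw [List.getElem?_eq_none (Nat.le_of_lt hgt), List.getElem?_eq_none]
            simp [Nat.succ_le_of_lt hgt]
  | cons i q ih =>
    cases T with
    | node l cs =>
      simp only [Tree.subtreeAt] at h
      cases hcs : cs[i]? with
      | none => rw [hcs] at h; simp at h
      | some tj =>
        rw [hcs] at h
        simp only [Option.bind_some] at h
        have hil : i < cs.length := by
          by_contra hh
          simp [List.getElem?_eq_none (Nat.le_of_not_lt hh)] at hcs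
        cases r with
        | nil =>
          simp only [Tree.appendChildAt, hcs, Tree.shape, Tree.subtreeAt]
          simp [Tree.children]
        | cons j r =>
          simp only [Tree.appendChildAt, hcs, Tree.shape, Tree.subtreeAt,
            List.cons_append, List.cons_prefix_cons, List.length_cons,
            List.drop_succ_cons, List.cons.injEq]
          by_cases hji : j = i
          · subst hji
            simp only [List.getElem?_set_self hil, Option.bind_some, hcs,
              if_pos rfl, true_and]
            have := ih tj h r
            simp only [Tree.shape] at this
            rw [this]
          · rw [List.getElem?_set_ne (fun hh => hji hh.symm),
              if_neg (fun hh => hji hh.1.symm), if_neg (fun hh => hji hh.1)]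

theorem labelAt_replaceAt (p : List ℕ) (u T : Tree F P)
    (h : (Tree.subtreeAt p T).isSome) (r : List ℕ) :
    Tree.labelAt r (Tree.replaceAt p u T) =
      if p <+: r then Tree.labelAt (r.drop p.length) u
      else Tree.labelAt r T := by
  induction p generalizing T r with
  | nil => simp [Tree.replaceAt]
  | cons i p ih =>
    cases T with
    | node l cs =>
      simp only [Tree.subtreeAt] at h
      cases hcs : cs[i]? with
      | none => rw [hcs] at h; simp at h
      | some tj =>
        rw [hcs] at h
        simp only [Option.bind_some] at h
        have hil : i < cs.length := by
          by_contra hh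
          simp [List.getElem?_eq_none (Nat.le_of_not_lt hh)] at hcs
        cases r with
        | nil =>
          simp [Tree.replaceAt, hcs, Tree.labelAt, Tree.subtreeAt, Tree.label]
        | cons j r =>
          simp only [Tree.replaceAt, hcs, Tree.labelAt, Tree.subtreeAt,
            List.cons_prefix_cons, List.length_cons, List.drop_succ_cons]
          by_cases hji : j = i
          · subst hji
            simp only [List.getElem?_set_self hil, Option.bind_some, if_pos rfl, true_and]
            have := ih tj h r
            simp only [Tree.labelAt] at this
            rw [this, hcs]
            simp
          · rw [List.getElem?_set_ne (fun hh => hji hh.symm), if_neg (fun hh => hji hh.1.symm)]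

variable {F P : Type}

theorem Term.subst_var (σ : Subst F) (v : Var) : Term.subst σ (Term.var v) = σ v := by
  rw [Term.subst]

theorem dom_compOn_subset (θ σ : Subst F) : Subst.dom (Subst.compOn θ σ) ⊆ Subst.dom θ := by
  intro v hv
  by_contra hd
  apply hv
  simp only [Subst.compOn, if_neg hd]

theorem domS_subst_subset (σ : Subst F) (l : MLit F P) :
    MLit.domS (MLit.subst σ l) ⊆ MLit.domS l := by
  cases l with
  | top => simp [MLit.subst, MLit.domS]
  | lit b p a S =>
    intro v hv
    simp only [MLit.subst, MLit.domS, Set.mem_setOf_eq] at hv ⊢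
    obtain ⟨τ, hτ, hvd⟩ := hv
    obtain ⟨ψ, hψ, rfl⟩ := hτ
    exact ⟨ψ, hψ, dom_compOn_subset ψ σ hvd⟩

theorem isFalse_subst (σ : Subst F) (l : MLit F P) (h : MLit.isFalse l) :
    MLit.isFalse (MLit.subst σ l) := by
  cases l with
  | top => exact h
  | lit b p a S =>
    simp only [MLit.isFalse] at h ⊢
    rw [h]; simp [MLit.subst]

theorem dom_subset_vars (σ : Subst F) : Subst.dom σ ⊆ Subst.vars σ :=
  Set.subset_union_left

theorem domS_subset_varsIn (l : MLit F P) : MLit.domS l ⊆ MLit.varsIn l := by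
  cases l with
  | top => simp [MLit.domS, MLit.varsIn]
  | lit b p a S =>
    intro v hv
    simp only [MLit.domS, Set.mem_setOf_eq] at hv
    obtain ⟨σ, hσ, hvd⟩ := hv
    exact Or.inr ⟨σ, hσ, dom_subset_vars σ hvd⟩

theorem varsIn_subset_tree (p : List ℕ) (T : Tree F P) (l : MLit F P)
    (h : Tree.labelAt p T = some l) : MLit.varsIn l ⊆ Tree.varsIn T :=
  fun v hv => ⟨p, l, h, hv⟩

theorem dom_renameBy_subset (ρ : Var → Var) (σ : Subst F) :
    Subst.dom (Subst.renameBy ρ σ) ⊆ ρ '' Subst.dom σ := by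
  intro v hv
  simp only [Subst.dom, Set.mem_setOf_eq, Subst.renameBy] at hv
  by_cases h : ∃ w, ρ w = v
  · rw [dif_pos h] at hv
    refine ⟨h.choose, ?_, h.choose_spec⟩
    intro hc
    apply hv
    rw [hc, Term.subst_var]
    simp only [renSubst, h.choose_spec]
  · rw [dif_neg h] at hv
    exact absurd rfl hv

theorem domS_rename_subset (ρ : Var → Var) (l : MLit F P) :
    MLit.domS (MLit.rename ρ l) ⊆ ρ '' MLit.domS l := by
  cases l with
  | top => simp [MLit.rename, MLit.domS]
  | lit b p a S =>
    intro v hv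
    simp only [MLit.rename, MLit.domS, Set.mem_setOf_eq] at hv
    obtain ⟨τ, hτ, hvd⟩ := hv
    obtain ⟨ψ, hψ, rfl⟩ := hτ
    obtain ⟨w, hw, rfl⟩ := dom_renameBy_subset ρ ψ hvd
    exact ⟨w, ⟨ψ, hψ, hw⟩, rfl⟩

open Classical in
theorem subst_lit_of_disjoint (θ : Subst F) (b : Bool) (p : P) (a : List (Term F))
    (S : Set (Subst F)) (h : MLit.domS (MLit.lit b p a S) ∩ Subst.dom θ = ∅) :
    MLit.subst θ (MLit.lit b p a S) =
      MLit.lit b p (a.map (Term.subst θ)) ((fun τ => Subst.compOn τ θ) '' S) := by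
  have hfun : (fun v => if ∃ τ ∈ S, v ∈ Subst.dom τ then Term.var v else θ v) = θ := by
    funext v
    by_cases hv : ∃ τ ∈ S, v ∈ Subst.dom τ
    · rw [if_pos hv]
      have hvd : v ∈ MLit.domS (MLit.lit b p a S) := hv
      have : v ∉ Subst.dom θ := fun hc =>
        Set.eq_empty_iff_forall_notMem.mp h v ⟨hvd, hc⟩
      simp only [Subst.dom, Set.mem_setOf_eq, not_not] at this
      exact this.symm
    · rw [if_neg hv]
  simp only [MLit.subst, hfun]

variable {F P : Type}

theorem labelAt_substT (σ : Subst F) (r : List ℕ) (T : Tree F P) :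
    Tree.labelAt r (Tree.substT σ T) = (Tree.labelAt r T).map (MLit.subst σ) := by
  rw [Tree.labelAt, Tree.labelAt, Tree.subtreeAt_substT]
  cases Tree.subtreeAt r T with
  | none => rfl
  | some s => cases s; simp [Tree.substT_node, Tree.label]

theorem shape_substT (σ : Subst F) (r : List ℕ) (T : Tree F P) :
    Tree.shape r (Tree.substT σ T) = Tree.shape r T := by
  rw [Tree.shape, Tree.shape, Tree.subtreeAt_substT]
  cases Tree.subtreeAt r T with
  | none => rfl
  | some s => cases s; simp [Tree.substT_node, Tree.children]

theorem isLeafPos_iff_shape (T : Tree F P) (r : List ℕ) :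
    Tree.IsLeafPos T r ↔ Tree.shape r T = some 0 := by
  constructor
  · rintro ⟨l, hl⟩
    simp [Tree.shape, hl, Tree.children]
  · intro h
    simp only [Tree.shape, Option.map_eq_some_iff] at h
    obtain ⟨s, hs, hlen⟩ := h
    cases s with
    | node l c =>
      simp only [Tree.children] at hlen
      exact ⟨l, by rw [hs, List.length_eq_zero_iff.mp hlen]⟩

theorem subtreeAt_leaf_cons (l : MLit F P) (j : ℕ) (s : List ℕ) :
    Tree.subtreeAt (j :: s) (Tree.node l []) = none := by
  simp [Tree.subtreeAt]

theorem prefix_same_length_eq {α : Type} {l₁ l₂ : List α} (h : l₁ <+: l₂)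
    (hl : l₂.length ≤ l₁.length) : l₁ = l₂ := by
  obtain ⟨t, rfl⟩ := h
  simp only [List.length_append] at hl
  have : t = [] := List.eq_nil_of_length_eq_zero (by omega)
  simp [this]

/-- Master characterization of the tree produced by a Separation step. -/
theorem sep_spec {T : Tree F P} {q : List ℕ} {i : ℕ} {b : Bool} {pr : P}
    {args : List (Term F)} {S : Set (Subst F)} {θ : Subst F} {f : Subst F → Subst F}
    {S1 S2 : Set (Subst F)} {T' : Tree F P}
    (hsep : SepStep T q i b pr args S θ f S1 S2 T') :
    ∃ len : ℕ, i < len ∧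
      Tree.labelAt (q ++ [i]) T = some (MLit.lit b pr args S) ∧
      (∀ r, (q ++ [len]) <+: r → Tree.labelAt r T = none) ∧
      Tree.labelAt (q ++ [len]) T' = some (MLit.lit b pr args S2) ∧
      Tree.labelAt (q ++ [i]) T' =
        some (MLit.lit b pr (args.map (Term.subst θ)) (f '' S1)) ∧
      (∀ r, r ≠ q ++ [i] → r ≠ q ++ [len] →
        Tree.labelAt r T' = (Tree.labelAt r T).map (MLit.subst θ)) ∧
      (∀ r, Tree.IsLeafPos T' r ↔ (r = q ++ [len] ∨ Tree.IsLeafPos T r)) := by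
  obtain ⟨n, μ, hqn, hne, hi, hμlab, hdomθ, hfresh, hS1, hf, hS1ne, hS2, hT'⟩ := hsep
  obtain ⟨ln, cn⟩ := n
  simp only [Tree.children] at hi hne
  have hilen : i < cn.length := by
    by_contra hh
    simp [List.getElem?_eq_none (Nat.le_of_not_lt hh)] at hi
  have hμsub : Tree.subtreeAt (q ++ [i]) T = some μ := by
    rw [Tree.subtreeAt_append, hqn]
    simp [Tree.subtreeAt, hi]
  have hμlabel : Tree.labelAt (q ++ [i]) T = some (MLit.lit b pr args S) := by
    rw [Tree.labelAt, hμsub, Option.map_some, hμlab]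
  have hnone : ∀ r, (q ++ [cn.length]) <+: r → Tree.labelAt r T = none := by
    rintro r ⟨t, rfl⟩
    rw [Tree.labelAt, List.append_assoc, Tree.subtreeAt_append, hqn]
    simp [Tree.subtreeAt, List.getElem?_eq_none (Nat.le_refl cn.length)]
  set u : Tree F P := Tree.node (MLit.lit b pr args S2) [] with hu
  set mnew : MLit F P := MLit.lit b pr (args.map (Term.subst θ)) (f '' S1) with hmnew
  set T1 : Tree F P := Tree.substT θ T with hT1
  set T2 : Tree F P := Tree.relabelAt (q ++ [i]) mnew T1 with hT2
  have hq1 : Tree.subtreeAt q T1 = some (Tree.substT θ (Tree.node ln cn)) := by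
    rw [hT1, Tree.subtreeAt_substT, hqn, Option.map_some]
  have hshapeq2 : Tree.shape q T2 = some cn.length := by
    rw [hT2, shape_relabelAt, Tree.shape, hq1, Option.map_some, Tree.substT_node]
    simp [Tree.children]
  obtain ⟨n2, hn2⟩ : ∃ n2, Tree.subtreeAt q T2 = some n2 := by
    rw [Tree.shape] at hshapeq2
    cases hsub : Tree.subtreeAt q T2 with
    | none => rw [hsub] at hshapeq2; simp at hshapeq2
    | some s => exact ⟨s, rfl⟩
  have hlen2 : n2.children.length = cn.length := by
    rw [Tree.shape, hn2, Option.map_some] at hshapeq2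
    exact Option.some.inj hshapeq2
  have happ := labelAt_appendChildAt q u T2 n2 hn2
  have happs := shape_appendChildAt q u T2 n2 hn2
  rw [hlen2] at happ happs
  have hdrop_eq : (q ++ [cn.length]).drop (q.length + 1) = [] := by
    apply List.drop_of_length_le
    simp
  have hpre_ne : ¬ (q ++ [cn.length]) <+: (q ++ [i]) := by
    intro hp
    have := prefix_same_length_eq hp (by simp)
    have := List.append_inj_right this (rfl)
    simp at this
    omega
  refine ⟨cn.length, hilen, hμlabel, hnone, ?_, ?_, ?_, ?_⟩
  · rw [hT', happ (q ++ [cn.length]), if_pos (List.prefix_refl _), hdrop_eq]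
    simp [Tree.labelAt, Tree.subtreeAt, Tree.label, hu]
  · rw [hT', happ (q ++ [i]), if_neg hpre_ne, hT2]
    apply labelAt_relabelAt_eq
    rw [hT1, Tree.subtreeAt_substT, hμsub]
    simp
  · intro r hri hrl
    by_cases hpre : (q ++ [cn.length]) <+: r
    · obtain ⟨t, rfl⟩ := hpre
      have ht : t ≠ [] := by rintro rfl; simp at hrl
      rw [hT', happ, if_pos ⟨t, rfl⟩]
      have hdt : (q ++ [cn.length] ++ t).drop (q.length + 1) = t := by
        have : q.length + 1 = (q ++ [cn.length]).length := by simp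
        rw [this, List.drop_left]
      rw [hdt, hnone _ ⟨t, by rw [List.append_assoc]⟩, Option.map_none]
      cases t with
      | nil => exact absurd rfl ht
      | cons j s => simp [Tree.labelAt, hu, subtreeAt_leaf_cons]
    · rw [hT', happ r, if_neg hpre, hT2,
        labelAt_relabelAt_ne _ _ _ _ hri, hT1, labelAt_substT]
  · intro r
    rw [isLeafPos_iff_shape, isLeafPos_iff_shape, hT', happs r]
    by_cases hpre : (q ++ [cn.length]) <+: r
    · rw [if_pos hpre]
      obtain ⟨t, rfl⟩ := hpre
      cases ht : t with
      | nil =>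
        subst ht
        simp only [List.append_nil]
        have : Tree.shape ((q ++ [cn.length]).drop (q.length + 1)) u = some 0 := by
          rw [hdrop_eq]; simp [Tree.shape, Tree.subtreeAt, Tree.children, hu]
        rw [this]
        simp
      | cons j s =>
        subst ht
        have hdt : (q ++ [cn.length] ++ (j :: s)).drop (q.length + 1) = j :: s := by
          have : q.length + 1 = (q ++ [cn.length]).length := by simp
          rw [this, List.drop_left]
        rw [hdt]
        have h1 : Tree.shape (j :: s) u = none := by
          rw [Tree.shape, hu, subtreeAt_leaf_cons]; rfl
        have h2 : Tree.shape (q ++ [cn.length] ++ (j :: s)) T = none := by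
          rw [Tree.shape, List.append_assoc, Tree.subtreeAt_append, hqn]
          simp [Tree.subtreeAt, List.getElem?_eq_none (Nat.le_refl cn.length)]
        rw [h1, h2]
        constructor
        · intro h; exact absurd h (by simp)
        · rintro (h | h)
          · exact absurd h (by simp)
          · simp at h
    · rw [if_neg hpre]
      by_cases hrq : r = q
      · subst hrq
        rw [if_pos rfl]
        have hsT : Tree.shape r T = some cn.length := by
          rw [Tree.shape, hqn]; rfl
        rw [hsT]
        have hrne : r ≠ r ++ [cn.length] := by simp
        simp only [hrne, false_or]
        constructor
        · intro h; simp at h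
        · intro h
          have : cn.length = 0 := by simpa using h
          exact absurd (List.eq_nil_of_length_eq_zero this) hne
      · rw [if_neg hrq, hT2, shape_relabelAt, hT1, shape_substT]
        have hrl : r ≠ q ++ [cn.length] := by rintro rfl; exact hpre (List.prefix_refl _)
        simp [hrl]

variable {F P : Type}

/-- Invariant: distinct nodes of an M-tableau carry M-literals whose substitution
sets have pairwise disjoint domains. -/
def TabInv (T : Tree F P) : Prop :=
  ∀ p1 p2 l1 l2, Tree.labelAt p1 T = some l1 → Tree.labelAt p2 T = some l2 →
    p1 ≠ p2 → MLit.domS l1 ∩ MLit.domS l2 = ∅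

theorem disj_comm {A B : Set Var} (h : A ∩ B = ∅) : B ∩ A = ∅ := by
  rw [Set.inter_comm]; exact h

theorem domS_mono (bb : Bool) (p : P) (a : List (Term F)) {S S' : Set (Subst F)}
    (h : S' ⊆ S) : MLit.domS (MLit.lit bb p a S') ⊆ MLit.domS (MLit.lit bb p a S) := by
  rintro v ⟨σ, hσ, hv⟩
  exact ⟨σ, h hσ, hv⟩

theorem disj_of_fresh {A B : Set Var} {T : Tree F P}
    (hA : A ⊆ Tree.varsIn T) (hB : ∀ v ∈ B, v ∉ Tree.varsIn T) : A ∩ B = ∅ := by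
  ext v
  simp only [Set.mem_inter_iff, Set.mem_empty_iff_false, iff_false, not_and]
  intro hvA hvB
  exact hB v hvB (hA hvA)

theorem domS_label_subset_tree {T : Tree F P} {r : List ℕ} {l : MLit F P}
    (h : Tree.labelAt r T = some l) : MLit.domS l ⊆ Tree.varsIn T :=
  (domS_subset_varsIn l).trans (varsIn_subset_tree r T l h)

theorem tableau_inv {𝒞 : Set (MClause F P)} (h𝒞 : GoodClauseSet 𝒞) {T : Tree F P}
    (hT : MTableau 𝒞 T) : TabInv T := by
  induction hT with
  | init =>
    intro p1 p2 l1 l2 h1 h2 hne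
    have hpos : ∀ p (l : MLit F P), Tree.labelAt p (Tree.node MLit.top []) = some l → p = [] := by
      intro p l h
      cases p with
      | nil => rfl
      | cons j s => simp [Tree.labelAt, Tree.subtreeAt] at h
    exact absurd ((hpos p1 l1 h1).trans (hpos p2 l2 h2).symm) hne
  | expand hprev hstep ih =>
    obtain ⟨p, l, C, ρ, ls, hsub, hC, htop, hρ, hnodup, hset, hdisj, hT'⟩ := hstep
    rename_i T T'
    have hrep := labelAt_replaceAt p (Tree.node l (ls.map (fun m => Tree.node m []))) T
      (by rw [hsub]; rfl)
    have hclass : ∀ r lbl, Tree.labelAt r T' = some lbl →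
        (Tree.labelAt r T = some lbl) ∨
        (∃ j, ∃ hj : j < ls.length, r = p ++ [j] ∧ lbl = ls[j]) := by
      intro r lbl h
      rw [hT', hrep r] at h
      by_cases hpre : p <+: r
      · obtain ⟨t, rfl⟩ := hpre
        rw [if_pos ⟨t, rfl⟩, List.drop_left] at h
        cases t with
        | nil =>
          left
          simp only [Tree.labelAt, Tree.subtreeAt, Option.map_some, Tree.label] at h
          rw [List.append_nil, Tree.labelAt, hsub, Option.map_some, Tree.label, h]
        | cons j t =>
          cases t with
          | nil =>
            right
            simp only [Tree.labelAt, Tree.subtreeAt, List.getElem?_map] at h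
            cases hj : ls[j]? with
            | none => rw [hj] at h; simp at h
            | some m =>
              rw [hj] at h
              simp only [Option.map_some, Option.bind_some, Option.map_some,
                Tree.label] at h
              have hjl : j < ls.length := by
                by_contra hh
                simp [List.getElem?_eq_none (Nat.le_of_not_lt hh)] at hj
              refine ⟨j, hjl, rfl, ?_⟩
              rw [List.getElem?_eq_getElem hjl] at hj
              rw [← Option.some.inj h, Option.some.inj hj]
          | cons x t =>
            exfalso
            simp only [Tree.labelAt, Tree.subtreeAt, List.getElem?_map] at h
            cases hj : ls[j]? with
            | none => rw [hj] at h; simp at h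
            | some m => rw [hj] at h; simp [Tree.subtreeAt] at h
      · rw [if_neg hpre] at h
        exact Or.inl h
    have hfresh : ∀ j (hj : j < ls.length), ∀ v ∈ MLit.domS ls[j], v ∉ Tree.varsIn T := by
      intro j hj v hv hvT
      have hm : ls[j] ∈ ls := List.getElem_mem hj
      have := hdisj ls[j] hm
      exact Set.eq_empty_iff_forall_notMem.mp this v ⟨domS_subset_varsIn _ hv, hvT⟩
    intro p1 p2 l1 l2 h1 h2 hne
    rcases hclass p1 l1 h1 with hc1 | ⟨j1, hj1, rfl, rfl⟩
    · rcases hclass p2 l2 h2 with hc2 | ⟨j2, hj2, rfl, rfl⟩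
      · exact ih p1 p2 l1 l2 hc1 hc2 hne
      · exact disj_of_fresh (domS_label_subset_tree hc1) (hfresh j2 hj2)
    · rcases hclass p2 l2 h2 with hc2 | ⟨j2, hj2, hp2, rfl⟩
      · exact disj_comm (disj_of_fresh (domS_label_subset_tree hc2) (hfresh j1 hj1))
      · -- two new siblings
        have hjne : j1 ≠ j2 := by
          intro hh
          apply hne
          rw [hp2, hh]
        have hmne : ls[j1] ≠ ls[j2] := by
          intro hh
          exact hjne ((hnodup.getElem_inj_iff).mp hh)
        have hm1 : ls[j1] ∈ MClause.rename ρ C := by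
          rw [← hset]; exact Set.mem_setOf_eq ▸ List.getElem_mem hj1
        have hm2 : ls[j2] ∈ MClause.rename ρ C := by
          rw [← hset]; exact Set.mem_setOf_eq ▸ List.getElem_mem hj2
        obtain ⟨a1, ha1, hea1⟩ := hm1
        obtain ⟨a2, ha2, hea2⟩ := hm2
        have hane : a1 ≠ a2 := by
          rintro rfl
          exact hmne (hea1.symm.trans hea2)
        have hwf := (h𝒞 C hC).1 a1 ha1 a2 ha2 hane
        ext v
        simp only [Set.mem_inter_iff, Set.mem_empty_iff_false, iff_false, not_and]
        intro hv1 hv2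
        rw [← hea1] at hv1
        rw [← hea2] at hv2
        obtain ⟨w1, hw1, hvw1⟩ := domS_rename_subset ρ a1 hv1
        obtain ⟨w2, hw2, hvw2⟩ := domS_rename_subset ρ a2 hv2
        have : w1 = w2 := hρ.1 (hvw1.trans hvw2.symm)
        subst this
        exact Set.eq_empty_iff_forall_notMem.mp hwf w1 ⟨hw1, hw2⟩
  | inst hprev hstep ih =>
    obtain ⟨x, s, hcond, hT'⟩ := hstep
    intro p1 p2 l1 l2 h1 h2 hne
    rw [hT', labelAt_substT] at h1 h2
    obtain ⟨m1, hm1, rfl⟩ := Option.map_eq_some_iff.mp h1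
    obtain ⟨m2, hm2, rfl⟩ := Option.map_eq_some_iff.mp h2
    have := ih p1 p2 m1 m2 hm1 hm2 hne
    ext v
    simp only [Set.mem_inter_iff, Set.mem_empty_iff_false, iff_false, not_and]
    intro hv1 hv2
    exact Set.eq_empty_iff_forall_notMem.mp this v
      ⟨domS_subst_subset _ _ hv1, domS_subst_subset _ _ hv2⟩
  | sep hprev hstep ih =>
    obtain ⟨q, i, b, pr, args, S, θ, f, S1, S2, hsep⟩ := hstep
    rename_i T T'
    obtain ⟨len, hilen, hμlabel, hnone, hnew, hμ', hold, hleaf⟩ := sep_spec hsep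
    obtain ⟨n, μ, hqn, hne', hi, hμlab, hdomθ, hfresh, hS1, hf, hS1ne, hS2, hT'eq⟩ := hsep
    have hqiql : q ++ [i] ≠ q ++ [len] := by
      intro hh
      have := List.append_inj_right hh rfl
      simp at this
      omega
    -- fresh variables of the relabelled node
    have hmnew_fresh : ∀ v ∈ MLit.domS (MLit.lit b pr (args.map (Term.subst θ)) (f '' S1)),
        v ∉ Tree.varsIn T := by
      rintro v ⟨σ', hσ', hv⟩ hvT
      obtain ⟨σ, hσ, rfl⟩ := hσ'
      exact ((hf σ hσ).2 v hv).2 hvT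
    have hS2sub : MLit.domS (MLit.lit b pr args S2) ⊆ MLit.domS (MLit.lit b pr args S) :=
      domS_mono b pr args (by rw [hS2]; exact Set.diff_subset)
    have hclass : ∀ r lbl, Tree.labelAt r T' = some lbl →
        (r = q ++ [len] ∧ lbl = MLit.lit b pr args S2) ∨
        (r = q ++ [i] ∧ lbl = MLit.lit b pr (args.map (Term.subst θ)) (f '' S1)) ∨
        (r ≠ q ++ [i] ∧ r ≠ q ++ [len] ∧
          ∃ m, Tree.labelAt r T = some m ∧ lbl = MLit.subst θ m) := by
      intro r lbl h
      by_cases h1 : r = q ++ [len]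
      · subst h1
        rw [hnew] at h
        exact Or.inl ⟨rfl, (Option.some.inj h).symm⟩
      by_cases h2 : r = q ++ [i]
      · subst h2
        rw [hμ'] at h
        exact Or.inr (Or.inl ⟨rfl, (Option.some.inj h).symm⟩)
      · right; right
        refine ⟨h2, h1, ?_⟩
        rw [hold r h2 h1] at h
        obtain ⟨m, hm, hml⟩ := Option.map_eq_some_iff.mp h
        exact ⟨m, hm, hml.symm⟩
    intro p1 p2 l1 l2 h1 h2 hne
    rcases hclass p1 l1 h1 with ⟨rfl, rfl⟩ | ⟨rfl, rfl⟩ | ⟨hne1i, hne1l, m1, hm1, rfl⟩ <;>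
      rcases hclass p2 l2 h2 with ⟨rfl, rfl⟩ | ⟨rfl, rfl⟩ | ⟨hne2i, hne2l, m2, hm2, rfl⟩
    · exact absurd rfl hne
    · exact disj_of_fresh
        (hS2sub.trans (domS_label_subset_tree hμlabel)) hmnew_fresh
    · -- new child vs old node
      have hd := ih p2 (q ++ [i]) m2 (MLit.lit b pr args S) hm2 hμlabel hne2i
      ext v
      simp only [Set.mem_inter_iff, Set.mem_empty_iff_false, iff_false, not_and]
      intro hv1 hv2
      exact Set.eq_empty_iff_forall_notMem.mp hd v
        ⟨domS_subst_subset _ _ hv2, hS2sub hv1⟩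
    · exact disj_comm (disj_of_fresh
        (hS2sub.trans (domS_label_subset_tree hμlabel)) hmnew_fresh)
    · exact absurd rfl hne
    · -- relabelled node vs old node
      exact disj_comm (disj_of_fresh
        ((domS_subst_subset θ m2).trans (domS_label_subset_tree hm2)) hmnew_fresh)
    · -- old vs new child
      have hd := ih p1 (q ++ [i]) m1 (MLit.lit b pr args S) hm1 hμlabel hne1i
      ext v
      simp only [Set.mem_inter_iff, Set.mem_empty_iff_false, iff_false, not_and]
      intro hv1 hv2
      exact Set.eq_empty_iff_forall_notMem.mp hd v
        ⟨domS_subst_subset _ _ hv1, hS2sub hv2⟩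
    · exact disj_of_fresh
        ((domS_subst_subset θ m1).trans (domS_label_subset_tree hm1)) hmnew_fresh
    · have hd := ih p1 p2 m1 m2 hm1 hm2 hne
      ext v
      simp only [Set.mem_inter_iff, Set.mem_empty_iff_false, iff_false, not_and]
      intro hv1 hv2
      exact Set.eq_empty_iff_forall_notMem.mp hd v
        ⟨domS_subst_subset _ _ hv1, domS_subst_subset _ _ hv2⟩


end AuxLemmas

/-- if `T'` is obtained from a closed M-tableau `T` by one application of
the Separation rule (producing the new child labelled `(L, t, S2)`), then at most one
branch of `T'` is not closed, any non-closed branch contains the node labelled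
`(L, t, S2)`, and if `S2 = ∅` then `T'` is closed. -/
theorem separation_preserves_closedness {F P : Type} (𝒞 : Set (MClause F P))
    (h𝒞 : GoodClauseSet 𝒞) (T : Tree F P) (hT : MTableau 𝒞 T)
    (hclosed : ClosedTree T)
    (q : List ℕ) (i : ℕ) (b : Bool) (pr : P) (args : List (Term F))
    (S : Set (Subst F)) (θ : Subst F) (f : Subst F → Subst F)
    (S1 S2 : Set (Subst F)) (T' : Tree F P)
    (hsep : SepStep T q i b pr args S θ f S1 S2 T') :
    (∀ lp, Tree.IsLeafPos T' lp → ¬ ClosedBranch T' lp →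
       ∃ r, r <+: lp ∧ Tree.labelAt r T' = some (MLit.lit b pr args S2)) ∧
    (∀ lp lp', Tree.IsLeafPos T' lp → Tree.IsLeafPos T' lp' →
       ¬ ClosedBranch T' lp → ¬ ClosedBranch T' lp' → lp = lp') ∧
    (S2 = ∅ → ClosedTree T') := by
  have hInv := tableau_inv h𝒞 hT
  obtain ⟨len, hilen, hμlabel, hnone, hnew, hμ', hold, hleaf⟩ := sep_spec hsep
  obtain ⟨n, μ, hqn, hne', hi, hμlab, hdomθ, hfresh, hS1def, hf, hS1ne, hS2, hT'eq⟩ := hsep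
  have hSne : S1 ≠ ∅ → S ≠ ∅ := by
    intro h1 hS
    apply h1
    rw [hS1def, hS]
    ext σ
    simp
  have hdisj : ∀ r l, Tree.labelAt r T = some l → r ≠ q ++ [i] →
      MLit.domS l ∩ Subst.dom θ = ∅ := by
    intro r l hr hri
    rw [hdomθ]
    exact hInv r (q ++ [i]) l _ hr hμlabel hri
  have hposT : ∀ r (l : MLit F P), Tree.labelAt r T = some l → r ≠ q ++ [len] := by
    intro r l hr hh
    rw [hh, hnone _ (List.prefix_refl _)] at hr
    cases hr
  have htrans : ∀ r (b' : Bool) (p' : P) (a' : List (Term F)) (S' : Set (Subst F)),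
      Tree.labelAt r T = some (MLit.lit b' p' a' S') → r ≠ q ++ [i] →
      Tree.labelAt r T' = some (MLit.lit b' p' (a'.map (Term.subst θ))
        ((fun τ => Subst.compOn τ θ) '' S')) := by
    intro r b' p' a' S' hr hri
    rw [hold r hri (hposT r _ hr), hr, Option.map_some,
      subst_lit_of_disjoint θ _ _ _ _ (hdisj r _ hr hri)]
  have hclosed_old : ∀ lp, Tree.IsLeafPos T lp → ClosedBranch T' lp := by
    intro lp hlp
    rcases hclosed lp hlp with ⟨r, l, hrlp, hrl, hfalse⟩ |
      ⟨r1, r2, pr', a', Sa, Sb, h1lp, h2lp, hl1, hl2⟩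
    · left
      have hri : r ≠ q ++ [i] := by
        rintro rfl
        rw [hμlabel] at hrl
        have hle : l = MLit.lit b pr args S := (Option.some.inj hrl).symm
        subst hle
        have hSe : S = ∅ := hfalse
        exact hSne hS1ne hSe
      exact ⟨r, MLit.subst θ l, hrlp,
        by rw [hold r hri (hposT r l hrl), hrl, Option.map_some], isFalse_subst θ l hfalse⟩
    · right
      by_cases h1 : r1 = q ++ [i]
      · subst h1
        rw [hμlabel] at hl1
        have he := Option.some.inj hl1
        have hb : b = true := by cases he; rfl
        have hpr : pr' = pr := by cases he; rfl
        have ha : a' = args := by cases he; rfl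
        have hr2 : r2 ≠ q ++ [i] := by
          rintro rfl
          rw [hμlabel] at hl2
          have hbf : b = false := by cases Option.some.inj hl2; rfl
          rw [hbf] at hb
          exact Bool.noConfusion hb
        refine ⟨q ++ [i], r2, pr, args.map (Term.subst θ), f '' S1,
          (fun τ => Subst.compOn τ θ) '' Sb, h1lp, h2lp, ?_, ?_⟩
        · rw [hμ', hb]
        · have := htrans r2 false pr' a' Sb hl2 hr2
          rw [hpr, ha] at this
          exact this
      · by_cases h2 : r2 = q ++ [i]
        · subst h2
          rw [hμlabel] at hl2
          have he := Option.some.inj hl2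
          have hb : b = false := by cases he; rfl
          have hpr : pr' = pr := by cases he; rfl
          have ha : a' = args := by cases he; rfl
          refine ⟨r1, q ++ [i], pr, args.map (Term.subst θ),
            (fun τ => Subst.compOn τ θ) '' Sa, f '' S1, h1lp, h2lp, ?_, ?_⟩
          · have := htrans r1 true pr' a' Sa hl1 h1
            rw [hpr, ha] at this
            exact this
          · rw [hμ', hb]
        · refine ⟨r1, r2, pr', a'.map (Term.subst θ),
            (fun τ => Subst.compOn τ θ) '' Sa, (fun τ => Subst.compOn τ θ) '' Sb,
            h1lp, h2lp, htrans r1 true pr' a' Sa hl1 h1, htrans r2 false pr' a' Sb hl2 h2⟩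
  have part1 : ∀ lp, Tree.IsLeafPos T' lp → ¬ ClosedBranch T' lp → lp = q ++ [len] := by
    intro lp hlp hnc
    rcases (hleaf lp).mp hlp with h | h
    · exact h
    · exact absurd (hclosed_old lp h) hnc
  refine ⟨?_, ?_, ?_⟩
  · intro lp hlp hnc
    refine ⟨q ++ [len], ?_, hnew⟩
    rw [part1 lp hlp hnc]
  · intro lp lp' h1 h2 hn1 hn2
    rw [part1 lp h1 hn1, part1 lp' h2 hn2]
  · intro hS2e lp hlp
    by_contra hnc
    apply hnc
    left
    refine ⟨q ++ [len], MLit.lit b pr args S2, ?_, hnew, hS2e⟩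
    rw [part1 lp hlp hnc]


end MTab
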